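/- Let X be a topological space. The following are equivalent: (i) for all subsets A, B ⊆ X, closure(A) ⊆ B if and only if A ⊆ interior(B) (i.e. topological closure and interior form an adjunction on the power set of X); (ii) every subset A ⊆ X is closed if and only if it is open. -/
import Mathlib

theorem closure_interior_adjunction_iff_clopen {X : Type*} [TopologicalSpace X] :
    (∀ A B : Set X, closure A ⊆ B ↔ A ⊆ interior B) ↔
    (∀ A : Set X, IsClosed A ↔ IsOpen A) := by
  constructor
  · intro h A
    constructor
    · intro hA
      have := (h A A).mp (hA.closure_subset)
      have : A = interior A := Set.Subset.antisymm this interior_subset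
      rw [this]; exact isOpen_interior
    · intro hA
      have : A ⊆ interior A := hA.subset_interior_iff.mpr subset_rfl
      have := (h A A).mpr this
      exact isClosed_of_closure_subset this
  · intro h A B
    constructor
    · intro hAB
      have hop : IsOpen (closure A) := (h (closure A)).mp isClosed_closure
      calc A ⊆ closure A := subset_closure
        _ = interior (closure A) := (hop.interior_eq).symm
        _ ⊆ interior B := interior_mono hAB
    · intro hAB
      have hcl : IsClosed (interior B) := (h (interior B)).mpr isOpen_interior
      calc closure A ⊆ closure (interior B) := closure_mono hAB
        _ = interior B := hcl.closure_eq
        _ ⊆ B := interior_subset
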